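/- For any continuous f on (0,1), ℱ[𝓑[f]](x) = √(1+x²) · 𝓑[ℱ[f]](x) for all x > 0, where ℱ[g](x) = ∫_0^{π/2} g(x sin θ)dθ and 𝓑[f](x) = (1/(1+x²)) f(x/√(1+x²)). -/

import Mathlib

open MeasureTheory Real Set Filter Topology

private lemma aux_deriv (x p : ℝ) (hp2 : p ^ 2 = 1 + x ^ 2) (θ : ℝ)
    (hcθ : 0 < Real.cos θ) :
    p / (1 + (x * Real.sin θ) ^ 2)
      = 1 / (1 + (p * Real.tan θ) ^ 2) * (p * (1 / Real.cos θ ^ 2)) := by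
  have hpyth := Real.sin_sq_add_cos_sq θ
  rw [Real.tan_eq_sin_div_cos]
  have h1 : (0:ℝ) < 1 + (x * Real.sin θ) ^ 2 := by positivity
  field_simp
  linear_combination p * hpyth
    + (p * Real.sin θ ^ 2) * hp2

private lemma aux_sq (x p : ℝ) (hp2 : p ^ 2 = 1 + x ^ 2) (θ : ℝ)
    (hcθ : 0 < Real.cos θ) :
    (1 + (p * Real.tan θ) ^ 2) = (1 + (x * Real.sin θ) ^ 2) / Real.cos θ ^ 2 := by
  have hpyth := Real.sin_sq_add_cos_sq θ
  rw [eq_div_iff (by positivity : (Real.cos θ ^ 2 : ℝ) ≠ 0), Real.tan_eq_sin_div_cos]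
  field_simp
  linear_combination hpyth + Real.sin θ ^ 2 * hp2

private lemma aux_arg (x p : ℝ) (hp0 : 0 < p) (θ : ℝ) (hcθ : 0 < Real.cos θ)
    (S : ℝ) (hS : 0 < S) :
    x / p * (p * Real.tan θ / (S / Real.cos θ)) = x * Real.sin θ / S := by
  have htmc := Real.tan_mul_cos hcθ.ne'
  field_simp
  linear_combination x * htmc

set_option maxHeartbeats 1000000 in
/-- `ℱ[𝓑[f]](x) = √(1+x²)·𝓑[ℱ[f]](x)` for `x > 0`. -/
theorem stmt_14 (f : ℝ → ℝ) (hf : ContinuousOn f (Set.Ico 0 1))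
    (x : ℝ) (hx : 0 < x) :
    ∫ θ in (0:ℝ)..(Real.pi/2),
        (1 / (1 + (x * Real.sin θ) ^ 2)) *
          f ((x * Real.sin θ) / Real.sqrt (1 + (x * Real.sin θ) ^ 2))
      = Real.sqrt (1 + x ^ 2) *
          ((1 / (1 + x ^ 2)) *
            ∫ θ in (0:ℝ)..(Real.pi/2),
              f ((x / Real.sqrt (1 + x ^ 2)) * Real.sin θ)) := by
  have pi2 : (0:ℝ) < π / 2 := by positivity
  set p : ℝ := Real.sqrt (1 + x ^ 2) with hp
  have hp0 : 0 < p := Real.sqrt_pos.mpr (by positivity)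
  have hp2 : p ^ 2 = 1 + x ^ 2 := Real.sq_sqrt (by positivity)
  set c : ℝ := x / p with hc
  have hc0 : 0 ≤ c := div_nonneg hx.le hp0.le
  have hc1 : c < 1 := by
    rw [hc, div_lt_one hp0]
    nlinarith [hp2, hp0]
  set F : ℝ → ℝ := fun θ =>
    (1 / (1 + (x * Real.sin θ) ^ 2)) *
      f ((x * Real.sin θ) / Real.sqrt (1 + (x * Real.sin θ) ^ 2)) with hF
  set G : ℝ → ℝ := fun y => f (c * Real.sin y) with hG
  -- basic fact: t/√(1+t²) ∈ [0,1) for t ≥ 0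
  have argmem : ∀ t : ℝ, 0 ≤ t → t / Real.sqrt (1 + t ^ 2) ∈ Set.Ico (0:ℝ) 1 := by
    intro t ht
    have h1 : 0 < Real.sqrt (1 + t ^ 2) := Real.sqrt_pos.mpr (by positivity)
    constructor
    · exact div_nonneg ht h1.le
    · rw [div_lt_one h1]
      exact Real.lt_sqrt_of_sq_lt (by linarith)
  -- continuity of F on [0, π/2]
  have contF : ContinuousOn F (Icc 0 (π / 2)) := by
    apply ContinuousOn.mul
    · apply Continuous.continuousOn
      apply continuous_const.div
      · continuity
      · intro θ; positivity
    · apply hf.comp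
      · apply Continuous.continuousOn
        apply Continuous.div
        · continuity
        · exact Real.continuous_sqrt.comp (by continuity)
        · intro θ
          exact (Real.sqrt_pos.mpr (by positivity)).ne'
      · intro θ hθ
        have hs : 0 ≤ Real.sin θ := Real.sin_nonneg_of_nonneg_of_le_pi hθ.1
          (le_trans hθ.2 (by linarith [Real.pi_pos]))
        exact argmem _ (mul_nonneg hx.le hs)
  have contG : ContinuousOn G (Icc 0 (π / 2)) := by
    apply hf.comp
    · exact (continuous_const.mul Real.continuous_sin).continuousOn
    · intro y hy
      have hs0 : 0 ≤ Real.sin y := Real.sin_nonneg_of_nonneg_of_le_pi hy.1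
        (le_trans hy.2 (by linarith [Real.pi_pos]))
      have hs1 : Real.sin y ≤ 1 := Real.sin_le_one y
      constructor
      · exact mul_nonneg hc0 hs0
      · calc c * Real.sin y ≤ c * 1 := by nlinarith
          _ < 1 := by linarith
  set L : ℝ → ℝ := fun t => ∫ θ in (0:ℝ)..t, F θ with hL
  set R : ℝ → ℝ := fun t => ∫ y in (0:ℝ)..t, G y with hR
  set φ : ℝ → ℝ := fun θ => Real.arctan (p * Real.tan θ) with hφdef
  -- φ maps [0, π/2) into [0, π/2)
  have φmem : ∀ θ, 0 ≤ θ → θ < π / 2 → φ θ ∈ Set.Ico 0 (π / 2) := by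
    intro θ h0 h1
    have hcθ : 0 < Real.cos θ :=
      Real.cos_pos_of_mem_Ioo ⟨by linarith [Real.pi_pos], h1⟩
    have htan : 0 ≤ Real.tan θ := by
      rw [Real.tan_eq_sin_div_cos]
      exact div_nonneg (Real.sin_nonneg_of_nonneg_of_le_pi h0
        (by linarith [Real.pi_pos])) hcθ.le
    refine ⟨?_, Real.arctan_lt_pi_div_two _⟩
    have := Real.arctan_strictMono.monotone (mul_nonneg hp0.le htan)
    simpa [hφdef] using this
  -- the key substitution identity on [0, b] for b < π/2
  have key : ∀ b ∈ Set.Ico (0:ℝ) (π / 2), L b = (1 / p) * R (φ b) := by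
    intro b hb
    have huIcc : Set.uIcc (0:ℝ) b = Set.Icc 0 b := Set.uIcc_of_le hb.1
    have hcos : ∀ θ ∈ Set.Icc (0:ℝ) b, 0 < Real.cos θ := by
      intro θ hθ
      exact Real.cos_pos_of_mem_Ioo ⟨by linarith [Real.pi_pos, hθ.1],
        lt_of_le_of_lt hθ.2 hb.2⟩
    -- derivative of φ
    have hderiv : ∀ θ ∈ Set.uIcc (0:ℝ) b,
        HasDerivAt φ (p / (1 + (x * Real.sin θ) ^ 2)) θ := by
      intro θ hθ
      rw [huIcc] at hθ
      have hcθ := hcos θ hθ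
      have h1 : HasDerivAt (fun t => p * Real.tan t) (p * (1 / Real.cos θ ^ 2)) θ :=
        (Real.hasDerivAt_tan hcθ.ne').const_mul p
      have h2 := Real.hasDerivAt_arctan (p * Real.tan θ)
      have h3 := h2.comp θ h1
      rw [aux_deriv x p hp2 θ hcθ]
      exact h3
    have hderivcont : ContinuousOn (fun θ => p / (1 + (x * Real.sin θ) ^ 2))
        (Set.uIcc (0:ℝ) b) := by
      apply Continuous.continuousOn
      apply continuous_const.div
      · continuity
      · intro θ; positivity
    have hgcont : ContinuousOn G (φ '' Set.uIcc (0:ℝ) b) := by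
      apply contG.mono
      rintro _ ⟨θ, hθ, rfl⟩
      rw [huIcc] at hθ
      have := φmem θ hθ.1 (lt_of_le_of_lt hθ.2 hb.2)
      exact ⟨this.1, this.2.le⟩
    have hsub := intervalIntegral.integral_comp_smul_deriv' hderiv hderivcont hgcont
    -- pointwise identity between F and the substituted integrand
    have hpt : ∀ θ ∈ Set.uIcc (0:ℝ) b,
        F θ = (1 / p) * ((p / (1 + (x * Real.sin θ) ^ 2)) • (G ∘ φ) θ) := by
      intro θ hθ
      rw [huIcc] at hθ
      have hcθ := hcos θ hθ
      have hsqrtpos : 0 < Real.sqrt (1 + (x * Real.sin θ) ^ 2) :=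
        Real.sqrt_pos.mpr (by positivity)
      -- c * sin (φ θ) = x sin θ / √(1 + (x sin θ)²)
      have hsin : c * Real.sin (φ θ)
          = (x * Real.sin θ) / Real.sqrt (1 + (x * Real.sin θ) ^ 2) := by
        have hsq : Real.sqrt (1 + (p * Real.tan θ) ^ 2)
            = Real.sqrt (1 + (x * Real.sin θ) ^ 2) / Real.cos θ := by
          rw [aux_sq x p hp2 θ hcθ, Real.sqrt_div (by positivity),
            Real.sqrt_sq hcθ.le]
        rw [hφdef]
        simp only [Real.sin_arctan]
        rw [hsq, hc]
        exact aux_arg x p hp0 θ hcθ _ hsqrtpos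
      simp only [hF, hG, Function.comp, smul_eq_mul, hsin]
      field_simp
    calc L b = ∫ θ in (0:ℝ)..b,
          (1 / p) * ((p / (1 + (x * Real.sin θ) ^ 2)) • (G ∘ φ) θ) :=
        intervalIntegral.integral_congr hpt
      _ = (1 / p) * ∫ θ in (0:ℝ)..b,
          (p / (1 + (x * Real.sin θ) ^ 2)) • (G ∘ φ) θ :=
        intervalIntegral.integral_const_mul _ _
      _ = (1 / p) * ∫ y in (φ 0)..(φ b), G y := by rw [hsub]
      _ = (1 / p) * R (φ b) := by
        have h0 : φ 0 = 0 := by simp [hφdef, Real.tan_zero]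
        rw [h0]
  -- now take limits b → π/2⁻ along 𝓝[Ico 0 (π/2)] (π/2)
  have huI : Set.uIcc (0:ℝ) (π / 2) = Set.Icc 0 (π / 2) := Set.uIcc_of_le pi2.le
  have hLcont : ContinuousOn L (Set.Icc 0 (π / 2)) := by
    rw [← huI]
    exact intervalIntegral.continuousOn_primitive_interval
      (huI ▸ contF.integrableOn_Icc)
  have hRcont : ContinuousOn R (Set.Icc 0 (π / 2)) := by
    rw [← huI]
    exact intervalIntegral.continuousOn_primitive_interval
      (huI ▸ contG.integrableOn_Icc)
  have hmem : (π / 2 : ℝ) ∈ Set.Icc (0:ℝ) (π / 2) := ⟨pi2.le, le_refl _⟩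
  have hne : (𝓝[Set.Ico (0:ℝ) (π / 2)] (π / 2)).NeBot := by
    rw [← mem_closure_iff_nhdsWithin_neBot, closure_Ico pi2.ne]
    exact hmem
  have hl : Tendsto L (𝓝[Set.Ico (0:ℝ) (π / 2)] (π / 2)) (𝓝 (L (π / 2))) :=
    (hLcont (π / 2) hmem).mono_left (nhdsWithin_mono _ Set.Ico_subset_Icc_self)
  have hφt : Tendsto φ (𝓝[Set.Ico (0:ℝ) (π / 2)] (π / 2))
      (𝓝[Set.Icc (0:ℝ) (π / 2)] (π / 2)) := by
    rw [tendsto_nhdsWithin_iff]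
    constructor
    · have h1 : Tendsto Real.tan (𝓝[Set.Ico (0:ℝ) (π / 2)] (π / 2)) atTop :=
        Real.tendsto_tan_pi_div_two.mono_left
          (nhdsWithin_mono _ fun y hy => hy.2)
      have h2 : Tendsto (fun b => p * Real.tan b)
          (𝓝[Set.Ico (0:ℝ) (π / 2)] (π / 2)) atTop := h1.const_mul_atTop hp0
      exact (Real.tendsto_arctan_atTop.mono_right nhdsWithin_le_nhds).comp h2
    · filter_upwards [eventually_mem_nhdsWithin] with b hb
      have := φmem b hb.1 hb.2
      exact ⟨this.1, this.2.le⟩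
  have hRt : Tendsto R (𝓝[Set.Icc (0:ℝ) (π / 2)] (π / 2)) (𝓝 (R (π / 2))) :=
    hRcont (π / 2) hmem
  have hr : Tendsto (fun b => (1 / p) * R (φ b))
      (𝓝[Set.Ico (0:ℝ) (π / 2)] (π / 2)) (𝓝 ((1 / p) * R (π / 2))) :=
    (hRt.comp hφt).const_mul _
  have hLR : L (π / 2) = (1 / p) * R (π / 2) := by
    apply tendsto_nhds_unique hl
    apply hr.congr'
    filter_upwards [eventually_mem_nhdsWithin] with b hb
    exact (key b hb).symm
  show L (π / 2) = p * ((1 / (1 + x ^ 2)) * R (π / 2))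
  rw [hLR, ← hp2]
  field_simp
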